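/- Let b ∈ ℝ, τ ≠ 0, ξ ∈ ℝ^d with ξ ≠ 0, and define h(t) = ⟨t⟩ · ⟨|ξ|t/τ + b⟩ for t ∈ ℝ, where ⟨x⟩ = 1 + |x|. Then min_{t ∈ ℝ} h(t) = 1 + min(1, |τ|/|ξ|)·|b|; in particular h(t) ≥ 1 + min(1, |τ|/|ξ|)|b| for all t ∈ ℝ. -/

import Mathlib

open Real

/-- The minimum of `h(t) = (1+|t|)(1+||ξ|t/τ + b|)` over `t ∈ ℝ` equals
`1 + min(1, |τ|/|ξ|)·|b|`. -/
theorem min_of_bracket_product (d : ℕ) (b τ : ℝ) (hτ : τ ≠ 0)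
    (ξ : EuclideanSpace ℝ (Fin d)) (hξ : ξ ≠ 0) :
    IsLeast (Set.range fun t : ℝ => (1 + |t|) * (1 + |‖ξ‖ * t / τ + b|))
      (1 + min 1 (|τ| / ‖ξ‖) * |b|) := by
  have hk : 0 < ‖ξ‖ := norm_pos_iff.mpr hξ
  have hτ' : 0 < |τ| := abs_pos.mpr hτ
  constructor
  · rcases le_total (|τ| / ‖ξ‖) 1 with h | h
    · refine ⟨-τ * b / ‖ξ‖, ?_⟩
      have h0 : ‖ξ‖ * (-τ * b / ‖ξ‖) / τ + b = 0 := by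
        field_simp; ring
      show (1 + |-τ * b / ‖ξ‖|) * (1 + |‖ξ‖ * (-τ * b / ‖ξ‖) / τ + b|) = _
      rw [h0, min_eq_right h]
      rw [abs_zero, abs_div, abs_mul, abs_neg]
      field_simp
      rw [abs_of_pos hk]; ring
    · refine ⟨0, ?_⟩
      rw [min_eq_left h]
      simp
  · rintro x ⟨t, rfl⟩
    simp only
    set X := ‖ξ‖ * t / τ + b with hX
    have htri : |b| ≤ |X| + ‖ξ‖ * |t| / |τ| := by
      have hb : b = X - ‖ξ‖ * t / τ := by rw [hX]; ring
      rw [hb]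
      calc |X - ‖ξ‖ * t / τ| ≤ |X| + |‖ξ‖ * t / τ| := abs_sub _ _
        _ = |X| + ‖ξ‖ * |t| / |τ| := by
            rw [abs_div, abs_mul, abs_of_nonneg hk.le]
    have htri' : |b| * |τ| ≤ |X| * |τ| + ‖ξ‖ * |t| := by
      have := mul_le_mul_of_nonneg_right htri hτ'.le
      rw [add_mul, div_mul_cancel₀ _ hτ'.ne'] at this
      linarith
    have hXn : 0 ≤ |X| := abs_nonneg _
    have htn : 0 ≤ |t| := abs_nonneg _
    have key : min 1 (|τ| / ‖ξ‖) * |b| ≤ |t| + |X| := by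
      rcases le_total (|τ|) (‖ξ‖) with h | h
      · have hmin : min 1 (|τ| / ‖ξ‖) = |τ| / ‖ξ‖ :=
          min_eq_right ((div_le_one hk).mpr h)
        rw [hmin, div_mul_eq_mul_div, div_le_iff₀ hk]
        nlinarith
      · have hmin : min 1 (|τ| / ‖ξ‖) = 1 :=
          min_eq_left ((one_le_div hk).mpr h)
        rw [hmin, one_mul]
        have h2 : ‖ξ‖ * |t| / |τ| ≤ |t| := by
          rw [div_le_iff₀ hτ']
          nlinarith
        linarith
    nlinarith [mul_nonneg htn hXn]
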